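/- arXiv:2106.11425 — 2 statements merged into one kernel-verified Lean document; each statement's English description precedes it below -/
import Mathlib

section
/- Let K ≥ 1, c ≥ 1, T > 0 and let F : ℝ^d → ℝ^d be continuously differentiable satisfying both (i) the one-sided Lipschitz condition ⟨x − y, F(x) − F(y)⟩ ≤ K‖x − y‖² for all x, y, and (ii) ‖DF(x)‖ ≤ K(1 + ‖x‖^c) for all x. Let N ≥ 1 be a natural number and h = T/N. Then for every y ∈ ℝ^d with 1 ≤ ‖y‖ ≤ N^{1/(2c)}, the tamed Euler increment satisfies ‖y + h·F̃_h(y)‖² ≤ ‖y‖²·(1 + (2/N)·((2TK + T‖F(0)‖)² + TK + T‖F(0)‖)). -/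
open scoped RealInnerProductSpace

/-- The tamed drift `F̃_h(x) = F(x) / (1 + h‖F(x)‖)`. -/
noncomputable def tamedDrift {d : ℕ} (F : EuclideanSpace ℝ (Fin d) → EuclideanSpace ℝ (Fin d))
    (h : ℝ) (x : EuclideanSpace ℝ (Fin d)) : EuclideanSpace ℝ (Fin d) :=
  (1 + h * ‖F x‖)⁻¹ • F x

set_option maxHeartbeats 1000000 in
/-- squared-norm bound on the tamed Euler increment in the intermediate regime. -/
theorem tamed_euler_increment_sq_bound (d : ℕ) (K c T : ℝ) (hK : 1 ≤ K) (hc : 1 ≤ c) (hT : 0 < T)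
    (F : EuclideanSpace ℝ (Fin d) → EuclideanSpace ℝ (Fin d)) (hF : ContDiff ℝ 1 F)
    (hos : ∀ x y, ⟪x - y, F x - F y⟫ ≤ K * ‖x - y‖ ^ 2)
    (hDF : ∀ x, ‖fderiv ℝ F x‖ ≤ K * (1 + ‖x‖ ^ c))
    (N : ℕ) (hN : 1 ≤ N) (h : ℝ) (hh : h = T / N)
    (y : EuclideanSpace ℝ (Fin d)) (hy1 : 1 ≤ ‖y‖) (hy2 : ‖y‖ ≤ (N : ℝ) ^ (1 / (2 * c))) :
    ‖y + h • tamedDrift F h y‖ ^ 2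
      ≤ ‖y‖ ^ 2 * (1 + (2 / N) * ((2 * T * K + T * ‖F 0‖) ^ 2 + T * K + T * ‖F 0‖)) := by
  have hN0 : (0:ℝ) < N := by exact_mod_cast hN
  have hN1 : (1:ℝ) ≤ N := by exact_mod_cast hN
  have hh0 : 0 < h := hh ▸ div_pos hT hN0
  have hc0 : (0:ℝ) < c := lt_of_lt_of_le one_pos hc
  have hr0 : (0:ℝ) < ‖y‖ := lt_of_lt_of_le one_pos hy1
  have hF0 : (0:ℝ) ≤ ‖F 0‖ := norm_nonneg _
  set u := F y with hu
  have hP1 : (1:ℝ) ≤ 1 + h * ‖u‖ := by nlinarith [norm_nonneg u, hh0.le]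
  have hP0 : (0:ℝ) < 1 + h * ‖u‖ := lt_of_lt_of_le one_pos hP1
  set s : ℝ := (1 + h * ‖u‖)⁻¹ with hsdef
  have hs0 : 0 < s := inv_pos.mpr hP0
  have hs1 : s ≤ 1 := by
    rw [hsdef]
    exact inv_le_one_of_one_le₀ hP1
  -- inner product bound
  have hinner : ⟪y, u⟫ ≤ (K + ‖F 0‖) * ‖y‖ ^ 2 := by
    have h1 := hos y 0
    simp only [sub_zero] at h1
    have h2 : ⟪y, F y - F 0⟫ = ⟪y, u⟫ - ⟪y, F 0⟫ := by
      rw [inner_sub_right]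
    have h3 : ⟪y, F 0⟫ ≤ ‖y‖ * ‖F 0‖ := real_inner_le_norm _ _
    have h4 : ‖y‖ * ‖F 0‖ ≤ ‖F 0‖ * ‖y‖ ^ 2 := by
      nlinarith [mul_nonneg hr0.le hF0]
    linarith
  -- rpow facts
  have hrc1 : (1:ℝ) ≤ ‖y‖ ^ c := by
    calc (1:ℝ) = (1:ℝ) ^ c := (Real.one_rpow c).symm
    _ ≤ ‖y‖ ^ c := Real.rpow_le_rpow zero_le_one hy1 hc0.le
  set q : ℝ := (N:ℝ) ^ ((1:ℝ)/2) with hqdef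
  have hqq : q * q = (N:ℝ) := by
    rw [hqdef, ← Real.rpow_add hN0]; norm_num
  have hq0 : 0 < q := Real.rpow_pos_of_pos hN0 _
  have hrcq : ‖y‖ ^ c ≤ q := by
    have h6 : ‖y‖ ^ c ≤ ((N:ℝ) ^ (1/(2*c))) ^ c :=
      Real.rpow_le_rpow hr0.le hy2 hc0.le
    rw [← Real.rpow_mul hN0.le] at h6
    have he : 1/(2*c) * c = (1:ℝ)/2 := by field_simp
    rwa [he] at h6
  -- mean value inequality
  have hdiff : Differentiable ℝ F := hF.differentiable one_ne_zero
  have hmv : ‖F y - F 0‖ ≤ K * (1 + ‖y‖ ^ c) * ‖y - 0‖ := by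
    apply Convex.norm_image_sub_le_of_norm_fderiv_le
      (fun x _ => hdiff.differentiableAt) ?_ (convex_closedBall 0 ‖y‖) ?_ ?_
    · intro x hx
      have hxr : ‖x‖ ≤ ‖y‖ := by simpa using mem_closedBall_zero_iff.mp hx
      have hxc : ‖x‖ ^ c ≤ ‖y‖ ^ c := Real.rpow_le_rpow (norm_nonneg x) hxr hc0.le
      calc ‖fderiv ℝ F x‖ ≤ K * (1 + ‖x‖ ^ c) := hDF x
        _ ≤ K * (1 + ‖y‖ ^ c) := by nlinarith
    · exact Metric.mem_closedBall_self hr0.le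
    · simp [mem_closedBall_zero_iff]
  rw [sub_zero] at hmv
  -- norm bound on u
  have hnormu : ‖u‖ ≤ (2*K + ‖F 0‖) * (‖y‖ ^ c * ‖y‖) := by
    have h5 : ‖u‖ ≤ ‖F y - F 0‖ + ‖F 0‖ := by
      have := norm_add_le (F y - F 0) (F 0)
      simpa using this
    have hK0 : (0:ℝ) ≤ K := le_trans zero_le_one hK
    have hA : K * (1 + ‖y‖ ^ c) * ‖y‖ ≤ 2 * K * (‖y‖ ^ c * ‖y‖) := by
      nlinarith [mul_nonneg (mul_nonneg hK0 hr0.le) (sub_nonneg.mpr hrc1)]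
    have hrcr : (1:ℝ) ≤ ‖y‖ ^ c * ‖y‖ :=
      le_trans hy1 (le_mul_of_one_le_left hr0.le hrc1)
    have hB : ‖F 0‖ ≤ ‖F 0‖ * (‖y‖ ^ c * ‖y‖) := le_mul_of_one_le_right hF0 hrcr
    nlinarith [h5, hmv, hA, hB]
  -- expand the square
  have hg0 : tamedDrift F h y = s • u := rfl
  rw [hg0, smul_smul, norm_add_sq_real, real_inner_smul_right, norm_smul]
  have habs : ‖h * s‖ = h * s := by
    rw [Real.norm_eq_abs, abs_of_pos (mul_pos hh0 hs0)]
  rw [habs]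
  -- bound the inner term
  have t1 : s * ⟪y, u⟫ ≤ (K + ‖F 0‖) * ‖y‖ ^ 2 := by
    rcases le_or_gt ⟪y, u⟫ 0 with hle | hlt
    · have : s * ⟪y, u⟫ ≤ 0 := mul_nonpos_of_nonneg_of_nonpos hs0.le hle
      nlinarith
    · calc s * ⟪y, u⟫ ≤ 1 * ⟪y, u⟫ := mul_le_mul_of_nonneg_right hs1 hlt.le
        _ = ⟪y, u⟫ := one_mul _
        _ ≤ (K + ‖F 0‖) * ‖y‖ ^ 2 := hinner
  -- bound the quadratic term
  have hub : h * ‖u‖ ≤ T/N * ((2*K + ‖F 0‖) * (q * ‖y‖)) := by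
    rw [hh]
    have hrq : ‖y‖ ^ c * ‖y‖ ≤ q * ‖y‖ := mul_le_mul_of_nonneg_right hrcq hr0.le
    have : ‖u‖ ≤ (2*K + ‖F 0‖) * (q * ‖y‖) := by
      calc ‖u‖ ≤ (2*K + ‖F 0‖) * (‖y‖ ^ c * ‖y‖) := hnormu
        _ ≤ (2*K + ‖F 0‖) * (q * ‖y‖) := by nlinarith
    exact mul_le_mul_of_nonneg_left this (le_of_lt (div_pos hT hN0))
  have hsq : ((h * s) * ‖u‖) ^ 2 ≤ T^2 * (2*K + ‖F 0‖)^2 * ‖y‖^2 / N := by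
    have h8 : 0 ≤ (h * s) * ‖u‖ := by positivity
    have h9 : (h * s) * ‖u‖ ≤ h * ‖u‖ := by
      have : h * s ≤ h * 1 := mul_le_mul_of_nonneg_left hs1 hh0.le
      nlinarith [norm_nonneg u]
    have h10 : (h * s) * ‖u‖ ≤ T/N * ((2*K + ‖F 0‖) * (q * ‖y‖)) := le_trans h9 hub
    calc ((h * s) * ‖u‖) ^ 2 ≤ (T/N * ((2*K + ‖F 0‖) * (q * ‖y‖))) ^ 2 :=
        pow_le_pow_left₀ h8 h10 2
      _ = T^2 * (2*K + ‖F 0‖)^2 * (q*q) * ‖y‖^2 / (N:ℝ)^2 := by ring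
      _ = T^2 * (2*K + ‖F 0‖)^2 * ‖y‖^2 / N := by rw [hqq]; field_simp
  -- final arithmetic
  have keyeq : ‖y‖ ^ 2 * (1 + (2 / N) * ((2*T*K + T*‖F 0‖) ^ 2 + T*K + T*‖F 0‖))
      = ‖y‖^2 + 2*(T/N)*((K + ‖F 0‖) * ‖y‖^2) + T^2*(2*K + ‖F 0‖)^2*‖y‖^2/N
        + ‖y‖^2*(2*T*K + T*‖F 0‖)^2/N := by
    field_simp
    ring
  have hX : 0 ≤ ‖y‖^2*(2*T*K + T*‖F 0‖)^2/N := by positivity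
  have t1' : 2 * (h * s * ⟪y, u⟫) ≤ 2*(T/N)*((K + ‖F 0‖) * ‖y‖^2) := by
    rw [hh]
    have : h * (s * ⟪y, u⟫) ≤ h * ((K + ‖F 0‖) * ‖y‖^2) :=
      mul_le_mul_of_nonneg_left t1 hh0.le
    rw [hh] at this
    nlinarith
  linarith [keyeq, hsq, t1', hX]
end

section
/- (Pathwise domination of the tamed exponential scheme.) Let K ≥ 1, c ≥ 1, T > 0, and let F : ℝ^d → ℝ^d be continuously differentiable satisfying the one-sided Lipschitz condition ⟨x − y, F(x) − F(y)⟩ ≤ K‖x − y‖² and ‖DF(x)‖ ≤ K(1 + ‖x‖^c) for all x, y. Let A, B_1, …, B_m ∈ ℝ^{d×d}, C := A − (1/2)∑_{i=1}^m B_i², let N ≥ 1 be a natural number, Δt = T/N, and let G_0, …, G_{N−1} ∈ ℝ^{d×d} be arbitrary matrices. Set M_k = exp(C·Δt + G_k), and define the scheme Y_0 = ξ ∈ ℝ^d, Y_{k+1} = M_k(Y_k + Δt·F̃_{Δt}(Y_k)) for 0 ≤ k ≤ N−1. With λ := e^{1 + T‖C‖}·(1 + 4TK + 2T‖F(0)‖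 + 2K)², define D_n := (λ + ‖ξ‖)·e^{λ}·max_{0 ≤ u ≤ n} ∏_{k=u}^{n−1} ‖M_k‖ (an empty product equals 1, so D_0 = (λ + ‖ξ‖)e^{λ}). Then for every n ∈ {0, 1, …, N}: if D_k ≤ N^{1/(2c)} and ‖G_k‖ ≤ 1 for all k < n, then ‖Y_n‖ ≤ D_n. -/
set_option maxHeartbeats 1000000

open scoped RealInnerProductSpace

/-- A matrix acting on Euclidean space. -/
noncomputable def matAct {d : ℕ} (M : Matrix (Fin d) (Fin d) ℝ)
    (v : EuclideanSpace ℝ (Fin d)) : EuclideanSpace ℝ (Fin d) :=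
  Matrix.toEuclideanCLM (𝕜 := ℝ) M v

/-- The operator norm of a matrix, acting on Euclidean space. -/
noncomputable def matOpNorm {d : ℕ} (M : Matrix (Fin d) (Fin d) ℝ) : ℝ :=
  ‖Matrix.toEuclideanCLM (𝕜 := ℝ) M‖


private lemma arith_step (r T K F0 L s p : ℝ) (hr : 0 ≤ r) (hT : 0 < T)
    (hK : 1 ≤ K) (hF0 : 0 ≤ F0) (hs : 1 ≤ s) (hp : 0 < p) (hsp : s * s * p = 1)
    (hQ : (1 + 4*T*K + 2*T*F0 + 2*K)^2 ≤ L) :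
    r^2 + 2*(T*p)*(K*r^2 + F0*r) + (T*p)^2*(F0 + 2*K*s*r)^2
      ≤ ((r + L*p)*(1 + L*p))^2 := by
  have hTK : 0 < T*K := mul_pos hT (lt_of_lt_of_le one_pos hK)
  have hTF0 : 0 ≤ T*F0 := mul_nonneg hT.le hF0
  have hK0 : (0:ℝ) < K := lt_of_lt_of_le one_pos hK
  have hL1 : 1 ≤ L := by nlinarith
  have h1 : 2*T*K + 4*T^2*K^2 ≤ 2*L := by nlinarith
  have h2 : 2*T*F0 + 4*T^2*F0*K ≤ 2*L := by nlinarith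
  have hL2TF0 : 2*T*F0 ≤ L := by nlinarith
  have h3 : T^2*F0^2 ≤ L^2 := by nlinarith
  have hsp1 : s*p ≤ 1 := by nlinarith [mul_nonneg (mul_nonneg (le_trans zero_le_one hs) hp.le) (by linarith : (0:ℝ) ≤ s - 1)]
  have hB' : (T*p)^2*(F0+2*K*s*r)^2
      = T^2*F0^2*p^2 + 4*T^2*F0*K*s*r*p^2 + 4*T^2*K^2*r^2*((s*s*p)*p) := by ring
  rw [hsp, one_mul] at hB'
  have t1 : 4*T^2*F0*K*s*r*p^2 ≤ 4*T^2*F0*K*r*p := by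
    have e : 4*T^2*F0*K*s*r*p^2 = (4*T^2*F0*K*r*p)*(s*p) := by ring
    rw [e]
    exact mul_le_of_le_one_right (by positivity) hsp1
  have key1 : r^2 + 2*(T*p)*(K*r^2 + F0*r) + (T*p)^2*(F0 + 2*K*s*r)^2
      ≤ r^2 + 2*L*(r^2*p) + 2*L*(r*p) + L^2*p^2 := by
    have hrp : (0:ℝ) ≤ r^2*p := by positivity
    have hrp2 : (0:ℝ) ≤ r*p := by positivity
    have hpp : (0:ℝ) ≤ p^2 := by positivity
    nlinarith [mul_le_mul_of_nonneg_right h1 hrp, mul_le_mul_of_nonneg_right h2 hrp2,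
      mul_le_mul_of_nonneg_right h3 hpp, t1, hB']
  have hLnn : (0:ℝ) ≤ L := by linarith
  have hdiff : ((r+L*p)*(1+L*p))^2
      = (r^2 + 2*L*(r^2*p) + 2*L*(r*p) + L^2*p^2)
        + (4*L^2*r*p^2 + 2*L^3*p^3 + L^2*r^2*p^2 + 2*L^3*r*p^3 + L^4*p^4) := by ring
  have hextra : (0:ℝ) ≤ 4*L^2*r*p^2 + 2*L^3*p^3 + L^2*r^2*p^2 + 2*L^3*r*p^3 + L^4*p^4 := by
    have h4 : (0:ℝ) ≤ 4*L^2*r*p^2 := by positivity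
    have h5 : (0:ℝ) ≤ 2*L^3*p^3 := by positivity
    have h6 : (0:ℝ) ≤ L^2*r^2*p^2 := by positivity
    have h7 : (0:ℝ) ≤ 2*L^3*r*p^3 := by positivity
    have h8 : (0:ℝ) ≤ L^4*p^4 := by positivity
    linarith
  linarith

private noncomputable def Pprod {d : ℕ} (M : ℕ → Matrix (Fin d) (Fin d) ℝ) (j : ℕ) : ℝ :=
  (Finset.range (j+1)).sup' Finset.nonempty_range_add_one
    (fun u => ∏ k ∈ Finset.Ico u j, matOpNorm (M k))

private lemma Pprod_one_le {d : ℕ} (M : ℕ → Matrix (Fin d) (Fin d) ℝ) (j : ℕ) :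
    1 ≤ Pprod M j := by
  have h := Finset.le_sup' (fun u => ∏ k ∈ Finset.Ico u j, matOpNorm (M k))
    (Finset.self_mem_range_succ j)
  exact le_trans (by simp) h

private lemma Pprod_step {d : ℕ} (M : ℕ → Matrix (Fin d) (Fin d) ℝ) (j : ℕ) :
    matOpNorm (M j) * Pprod M j ≤ Pprod M (j+1) := by
  obtain ⟨u, hu, hPu⟩ := Finset.exists_mem_eq_sup' (Finset.nonempty_range_add_one)
    (fun u => ∏ k ∈ Finset.Ico u j, matOpNorm (M k))
  have hu' : u ≤ j := by simpa [Nat.lt_succ_iff] using Finset.mem_range.mp hu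
  have h2 : matOpNorm (M j) * Pprod M j = ∏ k ∈ Finset.Ico u (j+1), matOpNorm (M k) := by
    rw [Pprod, hPu, Finset.prod_Ico_succ_top hu']
    ring
  rw [h2, Pprod]
  exact Finset.le_sup' (fun u => ∏ k ∈ Finset.Ico u (j+1), matOpNorm (M k)) (Finset.mem_range.mpr (by omega : u < j + 2))

private lemma key_step (d : ℕ) (K c T : ℝ)
    (hK : 1 ≤ K) (hc : 1 ≤ c) (hT : 0 < T)
    (F : EuclideanSpace ℝ (Fin d) → EuclideanSpace ℝ (Fin d)) (hF : ContDiff ℝ 1 F)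
    (hos : ∀ x y, ⟪x - y, F x - F y⟫ ≤ K * ‖x - y‖ ^ 2)
    (hDF : ∀ x, ‖fderiv ℝ F x‖ ≤ K * (1 + ‖x‖ ^ c))
    (N : ℕ) (hN : 1 ≤ N) (Δt : ℝ) (hΔt : Δt = T / N)
    (lam : ℝ) (hlamQ : (1 + 4*T*K + 2*T*‖F 0‖ + 2*K)^2 ≤ lam)
    (x : EuclideanSpace ℝ (Fin d)) (hx : ‖x‖ ≤ (N : ℝ) ^ (1 / (2 * c))) :
    ‖x + Δt • tamedDrift F Δt x‖
      ≤ (‖x‖ + lam * (N:ℝ)⁻¹) * (1 + lam * (N:ℝ)⁻¹) := by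
  have hN1 : (1:ℝ) ≤ (N:ℝ) := by exact_mod_cast hN
  have hNpos : (0:ℝ) < (N:ℝ) := by linarith
  have hΔtpos : 0 < Δt := by rw [hΔt]; positivity
  have hr : (0:ℝ) ≤ ‖x‖ := norm_nonneg x
  have hc0 : (0:ℝ) < c := by linarith
  set s : ℝ := (N:ℝ) ^ ((1:ℝ)/2) with hs_def
  have hs1 : 1 ≤ s := Real.one_le_rpow hN1 (by norm_num)
  have hss : s * s = (N:ℝ) := by
    rw [hs_def, ← Real.rpow_add hNpos]
    norm_num
  -- ‖x‖ ^ c ≤ s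
  have hxc : ‖x‖ ^ c ≤ s := by
    have h1 : ‖x‖ ^ c ≤ ((N:ℝ) ^ (1 / (2 * c))) ^ c := Real.rpow_le_rpow hr hx hc0.le
    rw [← Real.rpow_mul hNpos.le] at h1
    have h2 : 1 / (2 * c) * c = (1:ℝ)/2 := by field_simp
    rwa [h2] at h1
  -- growth bound on F
  have hFx : ‖F x‖ ≤ ‖F 0‖ + K * (1 + s) * ‖x‖ := by
    have hsub : ‖F x - F 0‖ ≤ (K * (1 + s)) * ‖x - 0‖ := by
      refine Convex.norm_image_sub_le_of_norm_fderiv_le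
        (s := Metric.closedBall (0:EuclideanSpace ℝ (Fin d)) ‖x‖)
        (fun y hy => hF.differentiable one_ne_zero y) (fun y hy => ?_)
        (convex_closedBall _ _) (Metric.mem_closedBall.mpr (by simp))
        (Metric.mem_closedBall.mpr (by simp [hr]))
      have hy' : ‖y‖ ≤ ‖x‖ := by simpa using Metric.mem_closedBall.mp hy
      have hyc : ‖y‖ ^ c ≤ s :=
        le_trans (Real.rpow_le_rpow (norm_nonneg y) hy' hc0.le) hxc
      calc ‖fderiv ℝ F y‖ ≤ K * (1 + ‖y‖ ^ c) := hDF y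
        _ ≤ K * (1 + s) := by nlinarith
    have htri : ‖F x‖ - ‖F 0‖ ≤ ‖F x - F 0‖ := norm_sub_norm_le _ _
    rw [sub_zero] at hsub
    linarith
  -- tamed drift bounds
  have hfac0 : (0:ℝ) < 1 + Δt * ‖F x‖ := by positivity
  have hfac1 : (1 + Δt * ‖F x‖)⁻¹ ≤ 1 := by
    rw [inv_le_one_iff₀]
    right; nlinarith [norm_nonneg (F x)]
  have hfacpos : (0:ℝ) < (1 + Δt * ‖F x‖)⁻¹ := inv_pos.mpr hfac0
  have htame : ‖tamedDrift F Δt x‖ ≤ ‖F x‖ := by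
    rw [tamedDrift, norm_smul, Real.norm_eq_abs, abs_of_pos hfacpos]
    exact mul_le_of_le_one_left (norm_nonneg _) hfac1
  have hinner : ⟪x, tamedDrift F Δt x⟫ ≤ K * ‖x‖^2 + ‖F 0‖ * ‖x‖ := by
    have h1 := hos x 0
    rw [sub_zero] at h1
    have h2 : ⟪x, F 0⟫ ≤ ‖F 0‖ * ‖x‖ := by
      have := real_inner_le_norm x (F 0); linarith [this]
    have h3 : ⟪x, F x - F 0⟫ = ⟪x, F x⟫ - ⟪x, F 0⟫ := inner_sub_right x (F x) (F 0)
    have hB : ⟪x, F x⟫ ≤ K * ‖x‖^2 + ‖F 0‖ * ‖x‖ := by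
      rw [h3] at h1; linarith
    have hBnn : 0 ≤ K * ‖x‖^2 + ‖F 0‖ * ‖x‖ := by positivity
    rw [tamedDrift, real_inner_smul_right]
    rcases le_or_gt (⟪x, F x⟫) 0 with h | h
    · exact le_trans (mul_nonpos_of_nonneg_of_nonpos hfacpos.le h) hBnn
    · calc (1 + Δt * ‖F x‖)⁻¹ * ⟪x, F x⟫ ≤ 1 * ⟪x, F x⟫ :=
          mul_le_mul_of_nonneg_right hfac1 h.le
        _ ≤ K * ‖x‖^2 + ‖F 0‖ * ‖x‖ := by rw [one_mul]; exact hB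
  -- expansion of the square
  have hexp : ‖x + Δt • tamedDrift F Δt x‖^2
      = ‖x‖^2 + 2*(Δt * ⟪x, tamedDrift F Δt x⟫) + Δt^2 * ‖tamedDrift F Δt x‖^2 := by
    rw [@norm_add_sq_real, real_inner_smul_right, norm_smul, Real.norm_eq_abs,
      abs_of_pos hΔtpos]
    ring
  have hp : (0:ℝ) < (N:ℝ)⁻¹ := by positivity
  have hsp : s * s * (N:ℝ)⁻¹ = 1 := by rw [hss]; exact mul_inv_cancel₀ hNpos.ne'
  have hΔt' : Δt = T * (N:ℝ)⁻¹ := by rw [hΔt]; ring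
  have hvb : ‖tamedDrift F Δt x‖ ≤ ‖F 0‖ + 2*K*s*‖x‖ := by
    have : K * (1 + s) * ‖x‖ ≤ 2*K*s*‖x‖ := by
      nlinarith [mul_nonneg (mul_nonneg (by linarith : (0:ℝ) ≤ K) (by linarith : (0:ℝ) ≤ s - 1)) hr]
    linarith
  have hvnn : (0:ℝ) ≤ ‖tamedDrift F Δt x‖ := norm_nonneg _
  have hsq : ‖x + Δt • tamedDrift F Δt x‖^2
      ≤ ((‖x‖ + lam * (N:ℝ)⁻¹) * (1 + lam * (N:ℝ)⁻¹))^2 := by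
    have harith := arith_step ‖x‖ T K ‖F 0‖ lam s (N:ℝ)⁻¹ hr hT hK (norm_nonneg _)
      hs1 hp hsp hlamQ
    have hvv : ‖tamedDrift F Δt x‖^2 ≤ (‖F 0‖ + 2*K*s*‖x‖)^2 := by
      nlinarith [hvb, hvnn]
    rw [← hΔt'] at harith
    have hsq1 : Δt^2 * ‖tamedDrift F Δt x‖^2 ≤ Δt^2 * (‖F 0‖ + 2*K*s*‖x‖)^2 :=
      mul_le_mul_of_nonneg_left hvv (by positivity)
    have hsq2 : Δt * ⟪x, tamedDrift F Δt x⟫ ≤ Δt * (K*‖x‖^2 + ‖F 0‖*‖x‖) :=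
      mul_le_mul_of_nonneg_left hinner hΔtpos.le
    rw [hexp]
    linarith [harith, hsq1, hsq2]
  have hRnn : (0:ℝ) ≤ (‖x‖ + lam * (N:ℝ)⁻¹) * (1 + lam * (N:ℝ)⁻¹) := by
    have hlnn : (0:ℝ) ≤ lam := le_trans (by positivity) hlamQ
    positivity
  calc ‖x + Δt • tamedDrift F Δt x‖
      = Real.sqrt (‖x + Δt • tamedDrift F Δt x‖^2) := (Real.sqrt_sq (norm_nonneg _)).symm
    _ ≤ Real.sqrt (((‖x‖ + lam * (N:ℝ)⁻¹) * (1 + lam * (N:ℝ)⁻¹))^2) := Real.sqrt_le_sqrt hsq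
    _ = _ := Real.sqrt_sq hRnn

/-- pathwise domination of the tamed exponential scheme by the
dominating process `D`. -/
theorem tamed_exponential_scheme_domination (d m : ℕ) (K c T : ℝ)
    (hK : 1 ≤ K) (hc : 1 ≤ c) (hT : 0 < T)
    (F : EuclideanSpace ℝ (Fin d) → EuclideanSpace ℝ (Fin d)) (hF : ContDiff ℝ 1 F)
    (hos : ∀ x y, ⟪x - y, F x - F y⟫ ≤ K * ‖x - y‖ ^ 2)
    (hDF : ∀ x, ‖fderiv ℝ F x‖ ≤ K * (1 + ‖x‖ ^ c))
    (A : Matrix (Fin d) (Fin d) ℝ) (B : Fin m → Matrix (Fin d) (Fin d) ℝ)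
    (C : Matrix (Fin d) (Fin d) ℝ) (hC : C = A - (1 / 2 : ℝ) • ∑ i, B i ^ 2)
    (N : ℕ) (hN : 1 ≤ N) (Δt : ℝ) (hΔt : Δt = T / N)
    (G : ℕ → Matrix (Fin d) (Fin d) ℝ)
    (M : ℕ → Matrix (Fin d) (Fin d) ℝ)
    (hM : ∀ k, M k = NormedSpace.exp (Δt • C + G k))
    (ξ : EuclideanSpace ℝ (Fin d)) (Y : ℕ → EuclideanSpace ℝ (Fin d)) (hY0 : Y 0 = ξ)
    (hYrec : ∀ k, k < N → Y (k + 1) = matAct (M k) (Y k + Δt • tamedDrift F Δt (Y k)))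
    (lam : ℝ)
    (hlam : lam = Real.exp (1 + T * matOpNorm C) * (1 + 4 * T * K + 2 * T * ‖F 0‖ + 2 * K) ^ 2)
    (D : ℕ → ℝ)
    (hD : ∀ n, D n = (lam + ‖ξ‖) * Real.exp lam *
      (Finset.range (n + 1)).sup' Finset.nonempty_range_add_one
        (fun u => ∏ k ∈ Finset.Ico u n, matOpNorm (M k)))
    (n : ℕ) (hn : n ≤ N)
    (hDdom : ∀ k, k < n → D k ≤ (N : ℝ) ^ (1 / (2 * c)))
    (hGdom : ∀ k, k < n → matOpNorm (G k) ≤ 1) :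
    ‖Y n‖ ≤ D n := by
  -- basic facts
  have hN1 : (1:ℝ) ≤ (N:ℝ) := by exact_mod_cast hN
  have hNpos : (0:ℝ) < (N:ℝ) := by linarith
  have hlamQ : (1 + 4*T*K + 2*T*‖F 0‖ + 2*K)^2 ≤ lam := by
    rw [hlam]
    have hCnn : (0:ℝ) ≤ matOpNorm C := norm_nonneg _
    have hE : 1 ≤ Real.exp (1 + T * matOpNorm C) :=
      Real.one_le_exp (by nlinarith)
    nlinarith [sq_nonneg (1 + 4 * T * K + 2 * T * ‖F 0‖ + 2 * K)]
  have hlamnn : (0:ℝ) ≤ lam := le_trans (by positivity) hlamQ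
  have hDP : ∀ j, D j = (lam + ‖ξ‖) * Real.exp lam * Pprod M j := fun j => hD j
  have hPnn : ∀ j, (0:ℝ) ≤ Pprod M j := fun j => le_trans zero_le_one (Pprod_one_le M j)
  -- the dominating quantity R j ≤ D j for j ≤ N
  have hRD : ∀ j : ℕ, j ≤ N →
      (‖ξ‖ + lam * j / N) * Real.exp (lam * j / N) * Pprod M j ≤ D j := by
    intro j hj
    rw [hDP j]
    have hjN : (j:ℝ) ≤ (N:ℝ) := by exact_mod_cast hj
    have hfrac : lam * j / N ≤ lam := by
      rw [div_le_iff₀ hNpos]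
      nlinarith
    have hfracnn : 0 ≤ lam * j / N := by positivity
    have f1 : ‖ξ‖ + lam * j / N ≤ lam + ‖ξ‖ := by linarith
    have f2 : Real.exp (lam * j / N) ≤ Real.exp lam := Real.exp_le_exp.mpr hfrac
    have : (‖ξ‖ + lam * j / N) * Real.exp (lam * j / N) ≤ (lam + ‖ξ‖) * Real.exp lam :=
      mul_le_mul f1 f2 (Real.exp_pos _).le (by positivity)
    exact mul_le_mul_of_nonneg_right this (hPnn j)
  -- main induction
  have main : ∀ j : ℕ, j ≤ n →
      ‖Y j‖ ≤ (‖ξ‖ + lam * j / N) * Real.exp (lam * j / N) * Pprod M j := by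
    intro j
    induction j with
    | zero =>
      intro _
      simp only [Nat.cast_zero, mul_zero, zero_div, Real.exp_zero, add_zero, mul_one]
      rw [hY0]
      exact le_mul_of_one_le_right (norm_nonneg _) (Pprod_one_le M 0)
    | succ j ih =>
      intro hj
      have hjn : j < n := Nat.lt_of_succ_le hj
      have hjN : j < N := lt_of_lt_of_le hjn hn
      have ihj := ih (le_of_lt hjn)
      have hfracnn : 0 ≤ lam * j / N := by positivity
      have hYD : ‖Y j‖ ≤ D j := le_trans ihj (hRD j (le_of_lt hjN))
      have hYb : ‖Y j‖ ≤ (N:ℝ) ^ (1 / (2 * c)) := le_trans hYD (hDdom j hjn)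
      have hstep := key_step d K c T hK hc hT F hF hos hDF N hN Δt hΔt lam hlamQ (Y j) hYb
      have hmnn : (0:ℝ) ≤ matOpNorm (M j) := norm_nonneg _
      have hEj : (1:ℝ) ≤ Real.exp (lam * j / N) := Real.one_le_exp hfracnn
      have hPj := Pprod_one_le M j
      have hRnn : (0:ℝ) ≤ ‖ξ‖ + lam * (j+1) / N := by positivity
      rw [hYrec j hjN]
      have hop : ‖matAct (M j) (Y j + Δt • tamedDrift F Δt (Y j))‖
          ≤ matOpNorm (M j) * ‖Y j + Δt • tamedDrift F Δt (Y j)‖ :=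
        (Matrix.toEuclideanCLM (𝕜 := ℝ) (M j)).le_opNorm _
      have c1 : ‖Y j + Δt • tamedDrift F Δt (Y j)‖
          ≤ ((‖ξ‖ + lam * j / N) * Real.exp (lam * j / N) * Pprod M j + lam * (N:ℝ)⁻¹)
              * (1 + lam * (N:ℝ)⁻¹) := by
        refine le_trans hstep (mul_le_mul_of_nonneg_right (by linarith) ?_)
        positivity
      have c2 : (‖ξ‖ + lam * j / N) * Real.exp (lam * j / N) * Pprod M j + lam * (N:ℝ)⁻¹
          ≤ (‖ξ‖ + lam * (j+1) / N) * Real.exp (lam * j / N) * Pprod M j := by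
        have e : (‖ξ‖ + lam * (j+1) / N) * Real.exp (lam * j / N) * Pprod M j
            - (‖ξ‖ + lam * j / N) * Real.exp (lam * j / N) * Pprod M j
            = (lam * (N:ℝ)⁻¹) * (Real.exp (lam * j / N) * Pprod M j) := by
          push_cast
          field_simp
          ring
        have h1 : lam * (N:ℝ)⁻¹ ≤ (lam * (N:ℝ)⁻¹) * (Real.exp (lam * j / N) * Pprod M j) := by
          refine le_mul_of_one_le_right (by positivity) ?_
          exact one_le_mul_of_one_le_of_one_le hEj hPj
        linarith
      have c3 : (1 : ℝ) + lam * (N:ℝ)⁻¹ ≤ Real.exp (lam * (N:ℝ)⁻¹) := by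
        have := Real.add_one_le_exp (lam * (N:ℝ)⁻¹)
        linarith
      have hfnn : (0:ℝ) ≤ (‖ξ‖ + lam * (j+1) / N) * Real.exp (lam * j / N) * Pprod M j := by
        have := hPnn j
        positivity
      calc ‖matAct (M j) (Y j + Δt • tamedDrift F Δt (Y j))‖
          ≤ matOpNorm (M j) * ‖Y j + Δt • tamedDrift F Δt (Y j)‖ := hop
        _ ≤ matOpNorm (M j) * (((‖ξ‖ + lam * (j+1) / N) * Real.exp (lam * j / N) * Pprod M j)
              * (1 + lam * (N:ℝ)⁻¹)) := by
            refine mul_le_mul_of_nonneg_left (le_trans c1 ?_) hmnn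
            refine mul_le_mul_of_nonneg_right c2 ?_
            positivity
        _ ≤ matOpNorm (M j) * (((‖ξ‖ + lam * (j+1) / N) * Real.exp (lam * j / N) * Pprod M j)
              * Real.exp (lam * (N:ℝ)⁻¹)) := by
            refine mul_le_mul_of_nonneg_left (mul_le_mul_of_nonneg_left c3 hfnn) hmnn
        _ = (‖ξ‖ + lam * ((j:ℕ)+1 : ℕ) / N) * Real.exp (lam * ((j:ℕ)+1 : ℕ) / N)
              * (matOpNorm (M j) * Pprod M j) := by
            have harg : lam * ((j:ℝ)+1) / N = lam * (j:ℝ) / N + lam * (N:ℝ)⁻¹ := by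
              field_simp
            push_cast
            rw [harg, Real.exp_add]
            ring
        _ ≤ (‖ξ‖ + lam * ((j:ℕ)+1 : ℕ) / N) * Real.exp (lam * ((j:ℕ)+1 : ℕ) / N)
              * Pprod M (j+1) := by
            refine mul_le_mul_of_nonneg_left (Pprod_step M j) ?_
            push_cast
            positivity
  exact le_trans (main n le_rfl) (hRD n hn)
end
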